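/- arXiv:1811.08529 — 7 statements merged into one kernel-verified Lean document; each statement's English description precedes it below -/
import Mathlib

section
/- Let P₁, P₂ ⊆ ℝ^d be polytopes with P_i = π_i({y ∈ ℝ^{m_i} : A^i y ≤ b^i}) for linear maps π_i : ℝ^{m_i} → ℝ^d. Then conv(P₁ ∪ P₂) = {x ∈ ℝ^d : ∃ y¹ ∈ ℝ^{m₁}, y² ∈ ℝ^{m₂}, λ ∈ ℝ such that x = π₁(y¹) + π₂(y²), A¹y¹ ≤ λb¹, A²y² ≤ (1−λ)b², 0 ≤ λ ≤ 1}. -/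
/-- If the polyhedron `{y | A y ≤ b}` is nonempty and its image under `π` is bounded,
then any recession direction `y` (i.e. `A y ≤ 0`) satisfies `π y = 0`. -/
lemma balas_rec_dir {d m k : ℕ} (A : Matrix (Fin k) (Fin m) ℝ) (b : Fin k → ℝ)
    (π : (Fin m → ℝ) →ₗ[ℝ] (Fin d → ℝ))
    (hne : {y | A.mulVec y ≤ b}.Nonempty)
    (hbd : Bornology.IsBounded (π '' {y | A.mulVec y ≤ b}))
    {y : Fin m → ℝ} (hy : A.mulVec y ≤ 0) : π y = 0 := by
  obtain ⟨z, hz⟩ := hne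
  obtain ⟨C, hC⟩ := (isBounded_iff_forall_norm_le).mp hbd
  by_contra h
  have hpy : 0 < ‖π y‖ := norm_pos_iff.mpr h
  have hCz : ‖π z‖ ≤ C := hC _ ⟨z, hz, rfl⟩
  have hC0 : 0 ≤ C := le_trans (norm_nonneg _) hCz
  set t : ℝ := (C + ‖π z‖ + 1) / ‖π y‖ with ht
  have ht0 : 0 ≤ t := div_nonneg (by positivity) hpy.le
  have hmem : z + t • y ∈ {y | A.mulVec y ≤ b} := by
    intro i
    have h1 := hz i
    have hyi := hy i
    simp only [Matrix.mulVec_add, Matrix.mulVec_smul, Pi.add_apply, Pi.smul_apply,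
      smul_eq_mul, Pi.zero_apply, Set.mem_setOf_eq] at *
    nlinarith
  have hle : ‖π (z + t • y)‖ ≤ C := hC _ ⟨_, hmem, rfl⟩
  have hval : π (z + t • y) = π z + t • π y := by simp
  rw [hval] at hle
  have h1 : ‖t • π y‖ ≤ ‖π z + t • π y‖ + ‖π z‖ := by
    calc ‖t • π y‖ = ‖(π z + t • π y) - π z‖ := by congr 1; abel
    _ ≤ ‖π z + t • π y‖ + ‖π z‖ := norm_sub_le _ _
  have h2 : ‖t • π y‖ = C + ‖π z‖ + 1 := by
    rw [norm_smul, Real.norm_of_nonneg ht0, ht, div_mul_cancel₀ _ hpy.ne']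
  linarith

/-- **Balas' theorem** on the union of two polytopes, each given as the image of a
polyhedron `{y : Aᵢ y ≤ bᵢ}` under a linear map `πᵢ`. -/
theorem balas_union_of_polytopes
    {d m₁ m₂ k₁ k₂ : ℕ}
    (A₁ : Matrix (Fin k₁) (Fin m₁) ℝ) (b₁ : Fin k₁ → ℝ)
    (A₂ : Matrix (Fin k₂) (Fin m₂) ℝ) (b₂ : Fin k₂ → ℝ)
    (π₁ : (Fin m₁ → ℝ) →ₗ[ℝ] (Fin d → ℝ))
    (π₂ : (Fin m₂ → ℝ) →ₗ[ℝ] (Fin d → ℝ))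
    (h₁ne : {y | A₁.mulVec y ≤ b₁}.Nonempty)
    (h₂ne : {y | A₂.mulVec y ≤ b₂}.Nonempty)
    (h₁bd : Bornology.IsBounded (π₁ '' {y | A₁.mulVec y ≤ b₁}))
    (h₂bd : Bornology.IsBounded (π₂ '' {y | A₂.mulVec y ≤ b₂})) :
    convexHull ℝ (π₁ '' {y | A₁.mulVec y ≤ b₁} ∪ π₂ '' {y | A₂.mulVec y ≤ b₂}) =
      {x | ∃ (y₁ : Fin m₁ → ℝ) (y₂ : Fin m₂ → ℝ) (l : ℝ),
        x = π₁ y₁ + π₂ y₂ ∧ A₁.mulVec y₁ ≤ l • b₁ ∧ A₂.mulVec y₂ ≤ (1 - l) • b₂ ∧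
        0 ≤ l ∧ l ≤ 1} := by
  apply Set.Subset.antisymm
  · -- convexHull ⊆ RHS: RHS is convex and contains both pieces
    apply convexHull_min
    · rintro x (⟨y₁, hy₁, rfl⟩ | ⟨y₂, hy₂, rfl⟩)
      · exact ⟨y₁, 0, 1, by simp, by simpa using hy₁, by simp, zero_le_one, le_refl 1⟩
      · exact ⟨0, y₂, 0, by simp, by simp, by simpa using hy₂, le_refl 0, zero_le_one⟩
    · rintro x ⟨y₁, y₂, l, rfl, h1, h2, hl0, hl1⟩ x' ⟨y₁', y₂', l', rfl, h1', h2', hl0', hl1'⟩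
        a c ha hc hac
      refine ⟨a • y₁ + c • y₁', a • y₂ + c • y₂', a * l + c * l', ?_, ?_, ?_, ?_, ?_⟩
      · simp only [map_add, map_smul]
        module
      · intro i
        have u := h1 i; have v := h1' i
        simp only [Matrix.mulVec_add, Matrix.mulVec_smul, Pi.add_apply, Pi.smul_apply,
          smul_eq_mul] at *
        have key : a * (l * b₁ i) + c * (l' * b₁ i) = (a * l + c * l') * b₁ i := by ring
        linarith [mul_le_mul_of_nonneg_left u ha, mul_le_mul_of_nonneg_left v hc]
      · intro i
        have u := h2 i; have v := h2' i
        simp only [Matrix.mulVec_add, Matrix.mulVec_smul, Pi.add_apply, Pi.smul_apply,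
          smul_eq_mul] at *
        have key : a * ((1 - l) * b₂ i) + c * ((1 - l') * b₂ i)
            = (1 - (a * l + c * l')) * b₂ i := by linear_combination b₂ i * hac
        linarith [mul_le_mul_of_nonneg_left u ha, mul_le_mul_of_nonneg_left v hc]
      · positivity
      · nlinarith
  · -- RHS ⊆ convexHull
    rintro x ⟨y₁, y₂, l, rfl, h1, h2, hl0, hl1⟩
    rcases eq_or_lt_of_le hl0 with h0 | h0
    · -- l = 0 : π₁ y₁ = 0 by recession lemma
      have hz : π₁ y₁ = 0 := balas_rec_dir A₁ b₁ π₁ h₁ne h₁bd (by simpa [← h0] using h1)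
      have hx : π₁ y₁ + π₂ y₂ = π₂ y₂ := by rw [hz]; simp
      rw [hx]
      exact subset_convexHull ℝ _ (Or.inr ⟨y₂, by simpa [← h0] using h2, rfl⟩)
    rcases eq_or_lt_of_le hl1 with h1' | h1'
    · -- l = 1 : π₂ y₂ = 0
      have hz : π₂ y₂ = 0 := balas_rec_dir A₂ b₂ π₂ h₂ne h₂bd (by simpa [h1'] using h2)
      have hx : π₁ y₁ + π₂ y₂ = π₁ y₁ := by rw [hz]; simp
      rw [hx]
      exact subset_convexHull ℝ _ (Or.inl ⟨y₁, by simpa [h1'] using h1, rfl⟩)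
    · -- 0 < l < 1 : genuine convex combination
      have hl : l ≠ 0 := ne_of_gt h0
      have hl' : (1 : ℝ) - l ≠ 0 := by linarith
      have hp₁ : π₁ (l⁻¹ • y₁) ∈ π₁ '' {y | A₁.mulVec y ≤ b₁} := by
        refine ⟨l⁻¹ • y₁, ?_, rfl⟩
        intro i
        have := h1 i
        simp only [Matrix.mulVec_smul, Pi.smul_apply, smul_eq_mul, Set.mem_setOf_eq] at *
        rw [inv_mul_le_iff₀ h0]
        linarith
      have hp₂ : π₂ ((1 - l)⁻¹ • y₂) ∈ π₂ '' {y | A₂.mulVec y ≤ b₂} := by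
        refine ⟨(1 - l)⁻¹ • y₂, ?_, rfl⟩
        intro i
        have := h2 i
        simp only [Matrix.mulVec_smul, Pi.smul_apply, smul_eq_mul, Set.mem_setOf_eq] at *
        rw [inv_mul_le_iff₀ (by linarith)]
        linarith
      have hmem := (convex_convexHull ℝ
          (π₁ '' {y | A₁.mulVec y ≤ b₁} ∪ π₂ '' {y | A₂.mulVec y ≤ b₂}))
        (subset_convexHull ℝ _ (Or.inl hp₁)) (subset_convexHull ℝ _ (Or.inr hp₂))
        hl0 (by linarith : (0:ℝ) ≤ 1 - l) (by ring)
      convert hmem using 2 <;>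
        rw [← map_smul, smul_smul] <;> simp [mul_inv_cancel₀, hl, hl']
end

section
/- Let Q ⊆ ℝ^n be a non-empty polyhedron with Q = {y : ∃ z, Ay + Bz ≤ b, Cy + Dz = d}, and let γ ∈ ℝ. Then {x : xᵀy ≤ γ for all y ∈ Q} = {x : ∃ λ ≥ 0, μ such that Aᵀλ + Cᵀμ = x, Bᵀλ + Dᵀμ = 0, bᵀλ + dᵀμ ≤ γ}. -/
open scoped Matrix InnerProductSpace
open Finset

variable {ι : Type*} [Fintype ι] [DecidableEq ι]
variable {H : Type*} [NormedAddCommGroup H] [InnerProductSpace ℝ H] [FiniteDimensional ℝ H]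

theorem isClosed_coneSet (a : ι → H) (s : Finset ι) :
    IsClosed {v : H | ∃ l : ι → ℝ, (∀ i, 0 ≤ l i) ∧ (∀ i ∉ s, l i = 0) ∧ ∑ i, l i • a i = v} := by
  induction s using Finset.strongInduction with
  | _ s ih =>
  by_cases hli : LinearIndependent ℝ (fun i : s => a i)
  · -- image of the orthant under a closed embedding
    set f : (s → ℝ) →ₗ[ℝ] H :=
      { toFun := fun x => ∑ i : s, x i • a i,
        map_add' := by intro x y; simp [add_smul, Finset.sum_add_distrib],
        map_smul' := by intro c x; simp [smul_smul, Finset.smul_sum] } with hf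
    have hker : LinearMap.ker f = ⊥ := by
      rw [LinearMap.ker_eq_bot']
      intro x hx
      have := (Fintype.linearIndependent_iff.mp hli) x hx
      funext i; exact this i
    have hemb := LinearMap.isClosedEmbedding_of_injective hker
    have horth : IsClosed {x : s → ℝ | ∀ i, 0 ≤ x i} := by
      have : {x : s → ℝ | ∀ i, 0 ≤ x i} = ⋂ i, {x : s → ℝ | 0 ≤ x i} := by
        ext x; simp [Set.mem_iInter]
      rw [this]
      exact isClosed_iInter fun i => isClosed_le continuous_const (continuous_apply i)
    have himg : {v : H | ∃ l : ι → ℝ, (∀ i, 0 ≤ l i) ∧ (∀ i ∉ s, l i = 0) ∧ ∑ i, l i • a i = v}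
        = f '' {x : s → ℝ | ∀ i, 0 ≤ x i} := by
      ext v
      constructor
      · rintro ⟨l, hl0, hls, hlv⟩
        refine ⟨fun i => l i, fun i => hl0 i, ?_⟩
        show ∑ i : s, l i • a i = v
        rw [Finset.sum_coe_sort s (fun i => l i • a i),
          Finset.sum_subset s.subset_univ (fun i _ hi => by rw [hls i hi, zero_smul]), hlv]
      · rintro ⟨x, hx, hxv⟩
        refine ⟨fun i => if h : i ∈ s then x ⟨i, h⟩ else 0, ?_, ?_, ?_⟩
        · intro i
          by_cases h : i ∈ s
          · simpa [h] using hx ⟨i, h⟩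
          · simp [h]
        · intro i hi; simp [hi]
        · rw [← hxv]
          show _ = ∑ i : s, x i • a i
          calc ∑ i : ι, (if h : i ∈ s then x ⟨i, h⟩ else 0) • a i
              = ∑ i ∈ s, (if h : i ∈ s then x ⟨i, h⟩ else 0) • a i :=
                (Finset.sum_subset s.subset_univ (fun i _ hi => by simp [hi])).symm
            _ = ∑ i ∈ s.attach, (if h : (i : ι) ∈ s then x ⟨i, h⟩ else 0) • a (i : ι) :=
                (Finset.sum_attach s _).symm
            _ = ∑ i : s, x i • a i := by
                rw [Finset.univ_eq_attach]
                exact Finset.sum_congr rfl (fun i _ => by simp [i.2])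
    rw [himg]
    exact hemb.isClosedMap _ horth
  · -- dependent case: union over erased indices
    obtain ⟨g, hg0, i₀, hgi₀⟩ := Fintype.not_linearIndependent_iff.mp hli
    -- extend g to ι by zero
    set c : ι → ℝ := fun i => if h : i ∈ s then g ⟨i, h⟩ else 0 with hc
    have hcs : ∀ i ∉ s, c i = 0 := fun i hi => by simp [hc, hi]
    have hcsum : ∑ i, c i • a i = 0 := by
      calc ∑ i : ι, c i • a i
          = ∑ i ∈ s, c i • a i :=
            (Finset.sum_subset s.subset_univ (fun i _ hi => by simp [hc, hi])).symm
        _ = ∑ i ∈ s.attach, c (i : ι) • a (i : ι) := (Finset.sum_attach s _).symm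
        _ = ∑ i : s, g i • a i := by
            rw [Finset.univ_eq_attach]
            exact Finset.sum_congr rfl (fun i _ => by simp [hc, i.2])
        _ = 0 := hg0
    have key : ∀ c : ι → ℝ, (∀ i ∉ s, c i = 0) → ∑ i, c i • a i = 0 → (∃ j ∈ s, c j < 0) →
        IsClosed {v : H | ∃ l : ι → ℝ, (∀ i, 0 ≤ l i) ∧ (∀ i ∉ s, l i = 0) ∧ ∑ i, l i • a i = v} := by
      intro c hcs hcsum ⟨j₀, hj₀s, hj₀⟩
      have hsub : {v : H | ∃ l : ι → ℝ, (∀ i, 0 ≤ l i) ∧ (∀ i ∉ s, l i = 0) ∧ ∑ i, l i • a i = v}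
          = ⋃ j ∈ s, {v : H | ∃ l : ι → ℝ, (∀ i, 0 ≤ l i) ∧ (∀ i ∉ s.erase j, l i = 0) ∧
              ∑ i, l i • a i = v} := by
        ext v
        simp only [Set.mem_setOf_eq, Set.mem_iUnion]
        constructor
        · rintro ⟨l, hl0, hls, hlv⟩
          -- pick t = min over negatives of l j / (-c j)
          have hTne : ({j ∈ s | c j < 0} : Finset ι).Nonempty :=
            ⟨j₀, by simp [hj₀s, hj₀]⟩
          obtain ⟨j₁, hj₁, hj₁min⟩ :=
            Finset.exists_min_image _ (fun j => l j / (-c j)) hTne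
          simp only [Finset.mem_filter] at hj₁ hj₁min
          set t : ℝ := l j₁ / (-c j₁) with ht
          have hcj₁ : 0 < -c j₁ := by linarith [hj₁.2]
          have ht0 : 0 ≤ t := div_nonneg (hl0 j₁) hcj₁.le
          have hl' : ∀ i, 0 ≤ l i + t * c i := by
            intro i
            by_cases hci : c i < 0
            · have his : i ∈ s := by
                by_contra his; exact absurd (hcs i his) (ne_of_lt hci)
              have := hj₁min i ⟨his, hci⟩
              have hcipos : 0 < -c i := by linarith
              have : t * (-c i) ≤ l i / (-c i) * (-c i) := by
                apply mul_le_mul_of_nonneg_right this hcipos.le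
              rw [div_mul_cancel₀ _ (ne_of_gt hcipos)] at this
              nlinarith
            · push_neg at hci
              nlinarith [hl0 i, mul_nonneg ht0 hci]
          refine ⟨j₁, hj₁.1, fun i => l i + t * c i, hl', ?_, ?_⟩
          · intro i hi
            by_cases his : i ∈ s
            · have hij : i = j₁ := by
                by_contra hne
                exact hi (Finset.mem_erase.mpr ⟨hne, his⟩)
              subst hij
              have hcne : c i ≠ 0 := ne_of_lt hj₁.2
              rw [ht]
              field_simp
              ring
            · show l i + t * c i = 0
              rw [hls i his, hcs i his]; ring
          · have : ∑ i, (l i + t * c i) • a i = ∑ i, l i • a i + t • ∑ i, c i • a i := by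
              simp [add_smul, Finset.sum_add_distrib, mul_smul, Finset.smul_sum]
            rw [this, hcsum, smul_zero, add_zero]
            exact hlv
        · rintro ⟨j, hjs, l, hl0, hls, hlv⟩
          exact ⟨l, hl0, fun i hi => hls i (fun hmem => hi (Finset.mem_of_mem_erase hmem)), hlv⟩
      rw [hsub]
      refine Set.Finite.isClosed_biUnion s.finite_toSet (fun j hj => ?_)
      exact ih _ (Finset.erase_ssubset hj)
    rcases Classical.em (∃ j ∈ s, c j < 0) with hneg | hpos
    · exact key c hcs hcsum hneg
    · refine key (-c) (fun i hi => by simp [hcs i hi]) (by simpa using hcsum) ?_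
      push_neg at hpos
      refine ⟨i₀, i₀.2, ?_⟩
      have h1 : c i₀ ≠ 0 := by simpa [hc, i₀.2] using hgi₀
      have h2 := hpos i₀ i₀.2
      simp only [Pi.neg_apply]
      exact neg_lt_zero.mpr (lt_of_le_of_ne h2 (Ne.symm h1))

open scoped InnerProductSpace in
theorem farkas_cone (a : ι → H) (v : H) :
    (∃ l : ι → ℝ, (∀ i, 0 ≤ l i) ∧ ∑ i, l i • a i = v) ↔
    ∀ y : H, (∀ i, 0 ≤ ⟪a i, y⟫_ℝ) → 0 ≤ ⟪v, y⟫_ℝ := by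
  constructor
  · rintro ⟨l, hl0, rfl⟩ y hy
    rw [sum_inner]
    exact Finset.sum_nonneg fun i _ => by
      rw [real_inner_smul_left]; exact mul_nonneg (hl0 i) (hy i)
  · intro hyp
    by_contra hnot
    haveI : CompleteSpace H := FiniteDimensional.complete ℝ H
    set K : ConvexCone ℝ H :=
      { carrier := {w : H | ∃ l : ι → ℝ, (∀ i, 0 ≤ l i) ∧ ∑ i, l i • a i = w},
        smul_mem' := by
          rintro c hc w ⟨l, hl0, rfl⟩
          exact ⟨fun i => c * l i, fun i => mul_nonneg hc.le (hl0 i), by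
            simp [Finset.smul_sum, mul_smul]⟩,
        add_mem' := by
          rintro w ⟨l, hl0, rfl⟩ w' ⟨l', hl'0, rfl⟩
          exact ⟨fun i => l i + l' i, fun i => add_nonneg (hl0 i) (hl'0 i), by
            simp [add_smul, Finset.sum_add_distrib]⟩ } with hK
    have hclosed : IsClosed (K : Set H) := by
      have := isClosed_coneSet a (Finset.univ : Finset ι)
      convert this using 1
      ext w
      simp [hK]
    have hne : (K : Set H).Nonempty :=
      ⟨0, ⟨fun _ => 0, fun i => le_refl 0, by simp⟩⟩
    obtain ⟨y, hy1, hy2⟩ : ∃ y, (∀ x ∈ K, 0 ≤ ⟪x, y⟫_ℝ) ∧ ⟪y, v⟫_ℝ < 0 := by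
      let P : ProperCone ℝ H :=
        { toSubmodule :=
            { carrier := (K : Set H)
              add_mem' := fun ha hb => K.add_mem ha hb
              zero_mem' := hne.some_mem.elim (fun _ _ => ⟨fun _ => 0, fun i => le_refl 0, by simp⟩)
              smul_mem' := by
                rintro c w ⟨l, hl0, rfl⟩
                exact ⟨fun i => c * l i, fun i => mul_nonneg c.2 (hl0 i), by
                  simp [Finset.smul_sum, mul_smul, NNReal.smul_def]⟩ }
          isClosed' := hclosed }
      obtain ⟨y, h1, h2⟩ := ProperCone.hyperplane_separation' P hnot
      exact ⟨y, fun x hx => h1 x hx, by rwa [real_inner_comm]⟩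
    have hay : ∀ i, 0 ≤ ⟪a i, y⟫_ℝ := by
      intro i
      refine hy1 (a i) ⟨Pi.single i 1, ?_, ?_⟩
      · intro j
        by_cases h : j = i <;> simp [Pi.single_apply, h]
      · simp [Pi.single_apply, Finset.sum_ite_eq', ite_smul]
    have := hyp y hay
    rw [real_inner_comm] at hy2
    linarith


/-- The scaled polar of (the projection onto the `y`-variables of) a non-empty polyhedron
`Q = {y : ∃ z, Ay + Bz ≤ b, Cy + Dz = d}` is given by the explicit extended formulation of
Martin / Weltge. -/
theorem polar_of_polyhedron
    {n p q r : ℕ}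
    (A : Matrix (Fin p) (Fin n) ℝ) (B : Matrix (Fin p) (Fin q) ℝ) (b : Fin p → ℝ)
    (C : Matrix (Fin r) (Fin n) ℝ) (D : Matrix (Fin r) (Fin q) ℝ) (d : Fin r → ℝ)
    (hne : {y : Fin n → ℝ |
      ∃ z, A.mulVec y + B.mulVec z ≤ b ∧ C.mulVec y + D.mulVec z = d}.Nonempty)
    (γ : ℝ) :
    {x : Fin n → ℝ | ∀ y,
        (∃ z, A.mulVec y + B.mulVec z ≤ b ∧ C.mulVec y + D.mulVec z = d) → x ⬝ᵥ y ≤ γ} =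
    {x : Fin n → ℝ | ∃ lam : Fin p → ℝ, ∃ mu : Fin r → ℝ, 0 ≤ lam ∧
        Aᵀ.mulVec lam + Cᵀ.mulVec mu = x ∧
        Bᵀ.mulVec lam + Dᵀ.mulVec mu = 0 ∧
        b ⬝ᵥ lam + d ⬝ᵥ mu ≤ γ} := by
  classical
  ext x
  simp only [Set.mem_setOf_eq]
  constructor
  · intro hx
    obtain ⟨y₀, z₀, h01, h02⟩ := hne
    let e : ((Fin n ⊕ Fin q ⊕ Unit) → ℝ) → EuclideanSpace ℝ (Fin n ⊕ Fin q ⊕ Unit) :=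
      (WithLp.equiv 2 ((Fin n ⊕ Fin q ⊕ Unit) → ℝ)).symm
    have inner_e : ∀ u w : (Fin n ⊕ Fin q ⊕ Unit) → ℝ, ⟪e u, e w⟫_ℝ = ∑ t, u t * w t := by
      intro u w
      simp only [e, WithLp.equiv_symm_apply, EuclideanSpace.inner_toLp_toLp, dotProduct, star_trivial]
      exact Finset.sum_congr rfl fun t _ => mul_comm _ _
    let gC : Fin r → EuclideanSpace ℝ (Fin n ⊕ Fin q ⊕ Unit) := fun j =>
      e (Sum.elim (fun t => C j t) (Sum.elim (fun k => D j k) (fun _ => d j)))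
    let a : (Fin p ⊕ Fin r ⊕ Fin r ⊕ Unit) → EuclideanSpace ℝ (Fin n ⊕ Fin q ⊕ Unit) := fun i =>
      match i with
      | .inl i => e (Sum.elim (fun t => A i t) (Sum.elim (fun k => B i k) (fun _ => b i)))
      | .inr (.inl j) => gC j
      | .inr (.inr (.inl j)) => -gC j
      | .inr (.inr (.inr _)) => e (Sum.elim (fun _ => 0) (Sum.elim (fun _ => 0) (fun _ => 1)))
    let v : EuclideanSpace ℝ (Fin n ⊕ Fin q ⊕ Unit) :=
      e (Sum.elim x (Sum.elim (fun _ => 0) (fun _ => γ)))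
    have hfar : ∀ y : EuclideanSpace ℝ (Fin n ⊕ Fin q ⊕ Unit),
        (∀ i, 0 ≤ ⟪a i, y⟫_ℝ) → 0 ≤ ⟪v, y⟫_ℝ := by
      intro y' hy'
      set w : (Fin n ⊕ Fin q ⊕ Unit) → ℝ := WithLp.equiv 2 _ y' with hw
      have hy'e : y' = e w := (Equiv.symm_apply_apply _ _).symm
      set Y : Fin n → ℝ := fun j => w (.inl j) with hY
      set Z : Fin q → ℝ := fun k => w (.inr (.inl k)) with hZ
      set s : ℝ := w (.inr (.inr ())) with hs
      have hwe : w = Sum.elim Y (Sum.elim Z (fun _ => s)) := by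
        funext t
        rcases t with j | k | u
        · rfl
        · rfl
        · rfl
      have h_s : 0 ≤ s := by
        have := hy' (.inr (.inr (.inr ())))
        rw [hy'e] at this
        simpa [a, inner_e, hwe, Fintype.sum_sum_type] using this
      have h_A : ∀ i, 0 ≤ (A.mulVec Y) i + (B.mulVec Z) i + b i * s := by
        intro i
        have := hy' (.inl i)
        rw [hy'e] at this
        simp only [a, inner_e, hwe, Fintype.sum_sum_type, Sum.elim_inl, Sum.elim_inr,
          Finset.univ_unique, Finset.sum_singleton] at this
        simp only [Matrix.mulVec, dotProduct]
        linarith [this]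
      have h_C : ∀ j, (C.mulVec Y) j + (D.mulVec Z) j + d j * s = 0 := by
        intro j
        have hp := hy' (.inr (.inl j))
        have hn := hy' (.inr (.inr (.inl j)))
        rw [hy'e] at hp hn
        rw [show a (.inr (.inr (.inl j))) = -gC j from rfl, inner_neg_left, neg_nonneg] at hn
        simp only [a, gC, inner_e, hwe, Fintype.sum_sum_type, Sum.elim_inl, Sum.elim_inr,
          Finset.univ_unique, Finset.sum_singleton] at hp hn
        simp only [Matrix.mulVec, dotProduct]
        linarith [hp, hn]
      have goal_eq : ⟪v, y'⟫_ℝ = x ⬝ᵥ Y + γ * s := by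
        rw [hy'e]
        simp [v, inner_e, hwe, Fintype.sum_sum_type, dotProduct]
      rw [goal_eq]
      rcases eq_or_lt_of_le h_s with hs0 | hs0
      · -- s = 0 : recession direction
        by_contra hcon
        push_neg at hcon
        rw [← hs0, mul_zero, add_zero] at hcon
        set ε : ℝ := -(x ⬝ᵥ Y) with hε
        have hεpos : 0 < ε := by rw [hε]; linarith
        set T : ℝ := max 0 ((γ - x ⬝ᵥ y₀ + 1) / ε) with hT
        have hT0 : 0 ≤ T := le_max_left _ _
        have hTlarge : γ - x ⬝ᵥ y₀ + 1 ≤ T * ε := by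
          have h1 : (γ - x ⬝ᵥ y₀ + 1) / ε ≤ T := le_max_right _ _
          calc γ - x ⬝ᵥ y₀ + 1 = ((γ - x ⬝ᵥ y₀ + 1) / ε) * ε := by field_simp
            _ ≤ T * ε := mul_le_mul_of_nonneg_right h1 hεpos.le
        have hmem1 : A.mulVec (y₀ + T • (-Y)) + B.mulVec (z₀ + T • (-Z)) ≤ b := by
          intro i
          have h1 := h01 i
          have h2 := h_A i
          rw [← hs0, mul_zero, add_zero] at h2
          simp only [Matrix.mulVec_add, Matrix.mulVec_smul, Matrix.mulVec_neg, Pi.add_apply,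
            Pi.smul_apply, Pi.neg_apply, smul_eq_mul] at h1 ⊢
          nlinarith
        have hmem2 : C.mulVec (y₀ + T • (-Y)) + D.mulVec (z₀ + T • (-Z)) = d := by
          funext j
          have h1 := congrFun h02 j
          have h2 := h_C j
          rw [← hs0, mul_zero, add_zero] at h2
          simp only [Matrix.mulVec_add, Matrix.mulVec_smul, Matrix.mulVec_neg, Pi.add_apply,
            Pi.smul_apply, Pi.neg_apply, smul_eq_mul] at h1 ⊢
          nlinarith
        have hle := hx (y₀ + T • (-Y)) ⟨z₀ + T • (-Z), hmem1, hmem2⟩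
        rw [dotProduct_add, dotProduct_smul, dotProduct_neg] at hle
        simp only [smul_eq_mul] at hle
        nlinarith
      · -- s > 0 : scale into Q
        have hmem1 : A.mulVec (s⁻¹ • (-Y)) + B.mulVec (s⁻¹ • (-Z)) ≤ b := by
          intro i
          have h2 := h_A i
          simp only [Matrix.mulVec_smul, Matrix.mulVec_neg, Pi.add_apply,
            Pi.smul_apply, Pi.neg_apply, smul_eq_mul]
          rw [show s⁻¹ * -(A.mulVec Y) i + s⁻¹ * -(B.mulVec Z) i
            = (-(A.mulVec Y) i + -(B.mulVec Z) i) / s by field_simp, div_le_iff₀ hs0]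
          linarith
        have hmem2 : C.mulVec (s⁻¹ • (-Y)) + D.mulVec (s⁻¹ • (-Z)) = d := by
          funext j
          have h2 := h_C j
          simp only [Matrix.mulVec_smul, Matrix.mulVec_neg, Pi.add_apply,
            Pi.smul_apply, Pi.neg_apply, smul_eq_mul]
          rw [show s⁻¹ * -(C.mulVec Y) j + s⁻¹ * -(D.mulVec Z) j
            = (-(C.mulVec Y) j + -(D.mulVec Z) j) / s by field_simp,
            div_eq_iff (ne_of_gt hs0)]
          linarith
        have hle := hx (s⁻¹ • (-Y)) ⟨s⁻¹ • (-Z), hmem1, hmem2⟩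
        rw [dotProduct_smul, dotProduct_neg] at hle
        simp only [smul_eq_mul] at hle
        have hmul := mul_le_mul_of_nonneg_left hle hs0.le
        rw [← mul_assoc, mul_inv_cancel₀ (ne_of_gt hs0), one_mul] at hmul
        linarith
    obtain ⟨l, hl0, hsum⟩ := (farkas_cone a v).mpr hfar
    set lam : Fin p → ℝ := fun i => l (.inl i) with hlam
    set mu : Fin r → ℝ := fun j => l (.inr (.inl j)) - l (.inr (.inr (.inl j))) with hmu
    have hsum' : ∑ i, l i • (WithLp.equiv 2 ((Fin n ⊕ Fin q ⊕ Unit) → ℝ) (a i))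
        = Sum.elim x (Sum.elim (fun _ => 0) (fun _ => γ)) := by
      have h := congrArg (WithLp.linearEquiv 2 ℝ ((Fin n ⊕ Fin q ⊕ Unit) → ℝ)) hsum
      rw [map_sum] at h
      simpa [WithLp.linearEquiv_apply, v, e] using h
    have hco : ∀ t, ∑ i, l i * (WithLp.equiv 2 ((Fin n ⊕ Fin q ⊕ Unit) → ℝ) (a i)) t
        = Sum.elim x (Sum.elim (fun _ => 0) (fun _ => γ)) t := by
      intro t
      have := congrFun hsum' t
      simpa [Finset.sum_apply, Pi.smul_apply] using this
    refine ⟨lam, mu, fun i => hl0 _, ?_, ?_, ?_⟩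
    · funext t
      have h := hco (.inl t)
      simp only [a, gC, e, Fintype.sum_sum_type, Sum.elim_inl, Sum.elim_inr,
        Finset.univ_unique, Finset.sum_singleton, Equiv.apply_symm_apply,
        WithLp.equiv_apply, WithLp.equiv_symm_apply, WithLp.ofLp_toLp, WithLp.ofLp_neg, Pi.neg_apply, mul_neg, mul_zero, Finset.sum_const_zero,
        add_zero] at h
      simp only [Pi.add_apply, Matrix.mulVec, dotProduct, Matrix.transpose_apply,
        hmu, hlam, mul_sub, Finset.sum_sub_distrib]
      simp only [Finset.sum_neg_distrib, ← sub_eq_add_neg] at h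
      rw [Finset.sum_congr rfl (fun i (_ : i ∈ Finset.univ) => mul_comm (A i t) (l (Sum.inl i))),
        Finset.sum_congr rfl (fun i (_ : i ∈ Finset.univ) => mul_comm (C i t) (l (Sum.inr (Sum.inl i)))),
        Finset.sum_congr rfl (fun i (_ : i ∈ Finset.univ) => mul_comm (C i t) (l (Sum.inr (Sum.inr (Sum.inl i)))))]
      exact h
    · funext t
      have h := hco (.inr (.inl t))
      simp only [a, gC, e, Fintype.sum_sum_type, Sum.elim_inl, Sum.elim_inr,
        Finset.univ_unique, Finset.sum_singleton, Equiv.apply_symm_apply,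
        WithLp.equiv_apply, WithLp.equiv_symm_apply, WithLp.ofLp_toLp, WithLp.ofLp_neg, Pi.neg_apply, mul_neg, mul_zero, mul_one,
        Finset.sum_const_zero, add_zero] at h
      simp only [Pi.add_apply, Pi.zero_apply, Matrix.mulVec, dotProduct,
        Matrix.transpose_apply, hmu, hlam, mul_sub, Finset.sum_sub_distrib]
      simp only [Finset.sum_neg_distrib, ← sub_eq_add_neg] at h
      rw [Finset.sum_congr rfl (fun i (_ : i ∈ Finset.univ) => mul_comm (B i t) (l (Sum.inl i))),
        Finset.sum_congr rfl (fun i (_ : i ∈ Finset.univ) => mul_comm (D i t) (l (Sum.inr (Sum.inl i)))),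
        Finset.sum_congr rfl (fun i (_ : i ∈ Finset.univ) => mul_comm (D i t) (l (Sum.inr (Sum.inr (Sum.inl i)))))]
      exact h
    · have h := hco (.inr (.inr ()))
      simp only [a, gC, e, Fintype.sum_sum_type, Sum.elim_inl, Sum.elim_inr,
        Finset.univ_unique, Finset.sum_singleton, Equiv.apply_symm_apply,
        WithLp.equiv_apply, WithLp.equiv_symm_apply, WithLp.ofLp_toLp, WithLp.ofLp_neg, Pi.neg_apply, mul_neg, mul_zero, mul_one,
        Finset.sum_const_zero, add_zero] at h
      simp only [dotProduct, hmu, hlam, mul_sub, Finset.sum_sub_distrib]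
      simp only [Finset.sum_neg_distrib, ← sub_eq_add_neg] at h
      rw [Finset.sum_congr rfl (fun i (_ : i ∈ Finset.univ) => mul_comm (b i) (l (Sum.inl i))),
        Finset.sum_congr rfl (fun i (_ : i ∈ Finset.univ) => mul_comm (d i) (l (Sum.inr (Sum.inl i)))),
        Finset.sum_congr rfl (fun i (_ : i ∈ Finset.univ) => mul_comm (d i) (l (Sum.inr (Sum.inr (Sum.inl i)))))]
      have hlast := hl0 (.inr (.inr (.inr ())))
      linarith [h]
  · rintro ⟨lam, mu, hlam, hx, h0, hγ⟩ y ⟨z, h1, h2⟩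
    have e1 : x ⬝ᵥ y = lam ⬝ᵥ A.mulVec y + mu ⬝ᵥ C.mulVec y := by
      rw [← hx, add_dotProduct, Matrix.mulVec_transpose, Matrix.mulVec_transpose,
        ← Matrix.dotProduct_mulVec, ← Matrix.dotProduct_mulVec]
    have e2 : lam ⬝ᵥ B.mulVec z + mu ⬝ᵥ D.mulVec z = 0 := by
      have := congrArg (fun v => v ⬝ᵥ z) h0
      simpa [add_dotProduct, Matrix.mulVec_transpose,
        ← Matrix.dotProduct_mulVec] using this
    have e3 : lam ⬝ᵥ (A.mulVec y + B.mulVec z) ≤ lam ⬝ᵥ b := by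
      unfold dotProduct
      refine Finset.sum_le_sum fun i _ => ?_
      exact mul_le_mul_of_nonneg_left (h1 i) (hlam i)
    have e4 : mu ⬝ᵥ (C.mulVec y + D.mulVec z) = mu ⬝ᵥ d := by rw [h2]
    rw [dotProduct_add] at e3 e4
    rw [dotProduct_comm b lam, dotProduct_comm d mu] at hγ
    linarith
end

section
/- Let G be a graph with vertices v₁,…,v_n and let 1 ≤ k ≤ n. For i = 1,…,k let V_i = N⁺(v_i) \ {v₁,…,v_{i−1}} and let V₀ = {v_{k+1},…,v_n}. Suppose for each i = 0,…,k that P_i ⊆ ℝ^{V_i} satisfies STAB(G[V_i]) ⊆ P_i ⊆ QSTAB(G[V_i]). Define P = {x ∈ ℝ^V : x|_{V_i} ∈ P_i for all i = 0,…,k}. Then STAB(G) ⊆ P ⊆ QSTAB(G). -/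
/-- Characteristic (incidence) vector of a finite vertex set. -/
noncomputable def charVec {V : Type*} [DecidableEq V] (S : Finset V) : V → ℝ :=
  fun v => if v ∈ S then 1 else 0

/-- The stable set polytope: convex hull of characteristic vectors of stable sets
(stable sets of `G` are exactly the cliques of the complement `Gᶜ`). -/
noncomputable def STAB {V : Type*} [DecidableEq V] (G : SimpleGraph V) : Set (V → ℝ) :=
  convexHull ℝ {x | ∃ S : Finset V, Gᶜ.IsClique ↑S ∧ x = charVec S}

/-- The clique relaxation of the stable set polytope. -/
def QSTAB {V : Type*} [DecidableEq V] (G : SimpleGraph V) : Set (V → ℝ) :=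
  {x | (∀ v, 0 ≤ x v) ∧ ∀ C : Finset V, G.IsClique ↑C → ∑ v ∈ C, x v ≤ 1}

/-- Restriction of a graph-`G` point to an induced subgraph lands in its STAB. -/
lemma restrict_mem_STAB {n : ℕ} (G : SimpleGraph (Fin n)) (U : Finset (Fin n))
    (x : Fin n → ℝ) (hx : x ∈ STAB G) :
    (fun v : (↑U : Set (Fin n)) => x v.1) ∈
      STAB (SimpleGraph.induce (↑U : Set (Fin n)) G) := by
  classical
  set L : (Fin n → ℝ) →ₗ[ℝ] ((↑U : Set (Fin n)) → ℝ) :=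
    LinearMap.funLeft ℝ ℝ Subtype.val with hL
  have key : STAB G ⊆ L ⁻¹' (STAB (SimpleGraph.induce (↑U : Set (Fin n)) G)) := by
    apply convexHull_min
    · rintro y ⟨S, hS, rfl⟩
      apply subset_convexHull
      refine ⟨Finset.univ.filter (fun v : (↑U : Set (Fin n)) => v.1 ∈ S), ?_, ?_⟩
      · intro a ha b hb hab
        simp only [Finset.coe_filter, Set.mem_setOf_eq] at ha hb
        have hab' : a.1 ≠ b.1 := fun h => hab (Subtype.ext h)
        have := hS ha.2 hb.2 hab'
        rw [SimpleGraph.compl_adj] at this ⊢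
        exact ⟨hab, fun h => this.2 h⟩
      · funext v
        simp [charVec, L, LinearMap.funLeft]
    · exact (convex_convexHull ℝ _).linear_preimage L
  exact key hx

/-- Decomposition lemma: with `Vᵢ = N⁺(vᵢ) \ {v₁,…,v_{i-1}}` for `i = 1,…,k` and
`V₀ = {v_{k+1},…,v_n}` (vertices are `0,…,n-1`, so `vᵢ` is the vertex `i-1`),
if each `Pᵢ` is squeezed between `STAB` and `QSTAB` of the induced subgraph `G[Vᵢ]`,
then `P = {x : x|_{Vᵢ} ∈ Pᵢ ∀ i}` is squeezed between `STAB(G)` and `QSTAB(G)`. -/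
theorem stab_qstab_decomposition {n k : ℕ} (hk1 : 1 ≤ k) (hkn : k ≤ n)
    (G : SimpleGraph (Fin n)) [DecidableRel G.Adj]
    (Vi : ℕ → Finset (Fin n))
    (hV0 : Vi 0 = Finset.univ.filter (fun v : Fin n => k ≤ (v : ℕ)))
    (hVi : ∀ i, (h1 : 1 ≤ i) → (h2 : i ≤ k) → Vi i =
      insert (⟨i - 1, by omega⟩ : Fin n)
          (G.neighborFinset (⟨i - 1, by omega⟩ : Fin n)) \
        Finset.univ.filter (fun v : Fin n => (v : ℕ) < i - 1))
    (P : ∀ i : ℕ, Set ((↑(Vi i) : Set (Fin n)) → ℝ))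
    (hP : ∀ i ≤ k, STAB (SimpleGraph.induce (↑(Vi i) : Set (Fin n)) G) ⊆ P i ∧
                   P i ⊆ QSTAB (SimpleGraph.induce (↑(Vi i) : Set (Fin n)) G)) :
    STAB G ⊆ {x : Fin n → ℝ |
        ∀ i ≤ k, (fun v : (↑(Vi i) : Set (Fin n)) => x v.1) ∈ P i} ∧
    {x : Fin n → ℝ |
        ∀ i ≤ k, (fun v : (↑(Vi i) : Set (Fin n)) => x v.1) ∈ P i} ⊆ QSTAB G := by
  classical
  constructor
  · intro x hx i hik
    exact (hP i hik).1 (restrict_mem_STAB G (Vi i) x hx)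
  · intro x hx
    -- for any clique C contained in Vi i (i ≤ k), the clique inequality holds;
    -- also get nonnegativity from membership.
    have hQ : ∀ i ≤ k, (fun v : (↑(Vi i) : Set (Fin n)) => x v.1) ∈
        QSTAB (SimpleGraph.induce (↑(Vi i) : Set (Fin n)) G) :=
      fun i hi => (hP i hi).2 (hx i hi)
    have sum_le : ∀ i ≤ k, ∀ C : Finset (Fin n), G.IsClique ↑C → C ⊆ Vi i →
        ∑ v ∈ C, x v ≤ 1 := by
      intro i hi C hC hCV
      set C' : Finset (↑(Vi i) : Set (Fin n)) :=
        Finset.univ.filter (fun v : (↑(Vi i) : Set (Fin n)) => v.1 ∈ C) with hC'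
      have hclique : (SimpleGraph.induce (↑(Vi i) : Set (Fin n)) G).IsClique ↑C' := by
        intro a ha b hb hab
        simp only [hC', Finset.coe_filter, Set.mem_setOf_eq] at ha hb
        exact hC ha.2 hb.2 (fun h => hab (Subtype.ext h))
      have := (hQ i hi).2 C' hclique
      have himg : C'.image Subtype.val = C := by
        ext v
        simp only [hC', Finset.mem_image, Finset.mem_filter, Finset.mem_univ, true_and]
        constructor
        · rintro ⟨a, ha, rfl⟩; exact ha
        · intro hv; exact ⟨⟨v, hCV hv⟩, hv, rfl⟩
      calc ∑ v ∈ C, x v = ∑ v ∈ C'.image Subtype.val, x v := by rw [himg]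
        _ = ∑ v ∈ C', x v.1 := Finset.sum_image (fun a _ b _ h => Subtype.ext h)
        _ ≤ 1 := this
    constructor
    · intro v
      by_cases hv : k ≤ (v : ℕ)
      · have hmem : v ∈ Vi 0 := by rw [hV0]; simp [hv]
        exact (hQ 0 (Nat.zero_le k)).1 ⟨v, hmem⟩
      · push_neg at hv
        set i := (v : ℕ) + 1 with hi
        have h1 : 1 ≤ i := by omega
        have h2 : i ≤ k := by omega
        have hveq : (⟨i - 1, by omega⟩ : Fin n) = v := by
          apply Fin.ext; simp [hi]
        have hmem : v ∈ Vi i := by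
          rw [hVi i h1 h2, Finset.mem_sdiff]
          refine ⟨?_, ?_⟩
          · rw [hveq]; exact Finset.mem_insert_self _ _
          · simp [hi]
        exact (hQ i h2).1 ⟨v, hmem⟩
    · intro C hC
      rcases C.eq_empty_or_nonempty with rfl | hne
      · simp
      · obtain ⟨v, hvC, hvmin⟩ := C.exists_min_image (fun w : Fin n => (w : ℕ)) hne
        by_cases hv : k ≤ (v : ℕ)
        · refine sum_le 0 (Nat.zero_le k) C hC ?_
          intro w hw
          rw [hV0]
          have := hvmin w hw
          simp only [Finset.mem_filter, Finset.mem_univ, true_and]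
          omega
        · push_neg at hv
          set i := (v : ℕ) + 1 with hi
          have h1 : 1 ≤ i := by omega
          have h2 : i ≤ k := by omega
          have hveq : (⟨i - 1, by omega⟩ : Fin n) = v := by
            apply Fin.ext; simp [hi]
          refine sum_le i h2 C hC ?_
          intro w hw
          rw [hVi i h1 h2, Finset.mem_sdiff]
          constructor
          · rw [hveq]
            by_cases hwv : w = v
            · subst hwv; exact Finset.mem_insert_self _ _
            · refine Finset.mem_insert_of_mem ?_
              rw [SimpleGraph.mem_neighborFinset]
              exact hC hvC hw (fun h => hwv h.symm)
          · have := hvmin w hw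
            simp only [Finset.mem_filter, Finset.mem_univ, true_and, hi]
            omega
end

section
/- Let M be a non-negative matrix that is the slack matrix of a pair of polytopes (P, Q) with P = conv(v₁,…,v_n) ⊆ Q = {x : Ax ≤ b} ⊆ ℝ^d, where A has rows a₁,…,a_m, i.e. M_{ij} = b_i − a_iᵀv_j ≥ 0. Suppose M = TU for non-negative matrices T (m × N) and U (N × n). Then P ⊆ {x ∈ ℝ^d : ∃ y ∈ ℝ^N, y ≥ 0, Ax + Ty = b} ⊆ Q. -/
/-- **Yannakakis' theorem for pairs of polytopes** (one direction): if the slack matrix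
`M` of the pair `(P, Q)`, `P = conv(v₁,…,v_n) ⊆ Q = {x : Ax ≤ b}`, admits a non-negative
factorization `M = T · U`, then `P ⊆ {x : ∃ y ≥ 0, Ax + Ty = b} ⊆ Q`. -/
theorem yannakakis_factorization_gives_ef
    {d n m N : ℕ} (v : Fin n → Fin d → ℝ)
    (A : Matrix (Fin m) (Fin d) ℝ) (b : Fin m → ℝ)
    (M : Matrix (Fin m) (Fin n) ℝ)
    (hM : ∀ i j, M i j = b i - A.mulVec (v j) i)
    (hMnn : ∀ i j, 0 ≤ M i j)
    (T : Matrix (Fin m) (Fin N) ℝ) (U : Matrix (Fin N) (Fin n) ℝ)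
    (hT : ∀ i j, 0 ≤ T i j) (hU : ∀ i j, 0 ≤ U i j)
    (hTU : M = T * U) :
    convexHull ℝ (Set.range v) ⊆
      {x | ∃ y : Fin N → ℝ, (∀ i, 0 ≤ y i) ∧ A.mulVec x + T.mulVec y = b} ∧
    {x | ∃ y : Fin N → ℝ, (∀ i, 0 ≤ y i) ∧ A.mulVec x + T.mulVec y = b} ⊆
      {x | A.mulVec x ≤ b} := by
  constructor
  · apply convexHull_min
    · rintro x ⟨j, rfl⟩
      refine ⟨fun k => U k j, fun k => hU k j, ?_⟩
      funext i
      have h := congrFun (congrFun hTU i) j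
      simp only [Matrix.mul_apply] at h
      have := hM i j
      simp only [Pi.add_apply, Matrix.mulVec, dotProduct]
      rw [this] at h
      simp only [Matrix.mulVec, dotProduct] at h ⊢
      linarith [h]
    · rintro x₁ hx₁ x₂ hx₂ s t hs ht hst
      obtain ⟨y₁, hy₁, he₁⟩ := hx₁
      obtain ⟨y₂, hy₂, he₂⟩ := hx₂
      refine ⟨s • y₁ + t • y₂, fun k => by simpa using add_nonneg (mul_nonneg hs (hy₁ k)) (mul_nonneg ht (hy₂ k)), ?_⟩
      have e1 : A.mulVec (s • x₁ + t • x₂) = s • A.mulVec x₁ + t • A.mulVec x₂ := by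
        rw [Matrix.mulVec_add, Matrix.mulVec_smul, Matrix.mulVec_smul]
      have e2 : T.mulVec (s • y₁ + t • y₂) = s • T.mulVec y₁ + t • T.mulVec y₂ := by
        rw [Matrix.mulVec_add, Matrix.mulVec_smul, Matrix.mulVec_smul]
      rw [e1, e2]
      funext i
      have h1 := congrFun he₁ i
      have h2 := congrFun he₂ i
      simp only [Pi.add_apply, Pi.smul_apply, smul_eq_mul] at *
      linear_combination s * h1 + t * h2 + b i * hst - b i
  · rintro x ⟨y, hy, he⟩ i
    have h := congrFun he i
    simp only [Pi.add_apply] at h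
    have : 0 ≤ T.mulVec y i := by
      simp only [Matrix.mulVec, dotProduct]
      exact Finset.sum_nonneg fun k _ => mul_nonneg (hT i k) (hy k)
    linarith
end

section
/- Let T = 2ℓ + L with positive integers ℓ, L. In any 0/1 vector x of length T in which every maximal block of consecutive ones has length ≥ ℓ and every maximal block of consecutive zeros has length ≥ L, and for any index i with x_i = 0, the window {i, i+1, …, min(i+L, T)} contains at most one switch-on index and at most one switch-off index of x. -/
/-- If `x a = v` and `x b = !v` with `a < b`, there is a flip point in `[a, b)`. -/
lemma flip_exists (x : ℕ → Bool) (v : Bool) :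
    ∀ n a b : ℕ, b = a + n → x a = v → x b = !v →
      ∃ k, a ≤ k ∧ k < b ∧ x k = v ∧ x (k + 1) = !v := by
  intro n
  induction n with
  | zero =>
    intro a b hb ha hbv
    subst hb; rw [ha] at hbv; cases v <;> simp_all
  | succ m ih =>
    intro a b hb ha hbv
    by_cases h1 : x (a + 1) = !v
    · exact ⟨a, le_refl a, by omega, ha, h1⟩
    · have h1' : x (a + 1) = v := by
        cases v <;> cases h : x (a + 1) <;> simp_all
      obtain ⟨k, hk1, hk2, hk3, hk4⟩ := ih (a + 1) b (by omega) h1' hbv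
      exact ⟨k, by omega, hk2, hk3, hk4⟩

/-- For a 0/1 vector `x` of length `T = 2ℓ + L` (indexed `1,…,T`) satisfying the
min-up/min-down condition — for switch indices `i < j`: `j - i ≥ ℓ` if `i` is switch-on and
`j` switch-off, and `j - i ≥ L` if `i` is switch-off and `j` switch-on — and any index `i`
with `x i = 0`, the window `{i, …, min (i+L) T}` contains at most one switch-on index and
at most one switch-off index.  (`x j = true` encodes `x_j = 1`; an index `j` with
`1 ≤ j ≤ T - 1` is switch-on if `x j = 0, x (j+1) = 1`, switch-off if `x j = 1, x (j+1) = 0`.) -/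
theorem minUpMinDown_window_few_switches
    (l L T : ℕ) (hl : 0 < l) (hL : 0 < L) (hT : T = 2 * l + L)
    (x : ℕ → Bool)
    (hmin : ∀ i j : ℕ, 1 ≤ i → i < j → j + 1 ≤ T →
      ((x i = false ∧ x (i + 1) = true) → (x j = true ∧ x (j + 1) = false) → l ≤ j - i) ∧
      ((x i = true ∧ x (i + 1) = false) → (x j = false ∧ x (j + 1) = true) → L ≤ j - i))
    (i : ℕ) (hi1 : 1 ≤ i) (hiT : i ≤ T) (hxi : x i = false) :
    (∀ j₁ j₂ : ℕ, i ≤ j₁ → j₁ ≤ min (i + L) T → i ≤ j₂ → j₂ ≤ min (i + L) T →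
      j₁ + 1 ≤ T → j₂ + 1 ≤ T →
      x j₁ = false → x (j₁ + 1) = true → x j₂ = false → x (j₂ + 1) = true → j₁ = j₂) ∧
    (∀ j₁ j₂ : ℕ, i ≤ j₁ → j₁ ≤ min (i + L) T → i ≤ j₂ → j₂ ≤ min (i + L) T →
      j₁ + 1 ≤ T → j₂ + 1 ≤ T →
      x j₁ = true → x (j₁ + 1) = false → x j₂ = true → x (j₂ + 1) = false → j₁ = j₂) := by
  -- auxiliary: no two switch-ons with a < b, b - a ≤ L
  have keyOn : ∀ a b : ℕ, 1 ≤ a → a < b → b - a ≤ L → b + 1 ≤ T →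
      x a = false → x (a + 1) = true → x b = false → x (b + 1) = true → False := by
    intro a b ha hab hba hbT xa xa1 xb xb1
    -- between a+1 (true) and b (false) there is a switch-off k
    obtain ⟨k, hk1, hk2, hk3, hk4⟩ :=
      flip_exists x true (b - (a + 1)) (a + 1) b (by omega) xa1 (by simpa using xb)
    have h1 := (hmin a k ha (by omega) (by omega)).1 ⟨xa, xa1⟩ ⟨hk3, by simpa using hk4⟩
    have h2 := (hmin k b (by omega) hk2 hbT).2 ⟨hk3, by simpa using hk4⟩ ⟨xb, xb1⟩
    omega
  have keyOff : ∀ a b : ℕ, 1 ≤ a → a < b → b - a ≤ L → b + 1 ≤ T →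
      x a = true → x (a + 1) = false → x b = true → x (b + 1) = false → False := by
    intro a b ha hab hba hbT xa xa1 xb xb1
    obtain ⟨k, hk1, hk2, hk3, hk4⟩ :=
      flip_exists x false (b - (a + 1)) (a + 1) b (by omega) xa1 (by simpa using xb)
    have h1 := (hmin a k ha (by omega) (by omega)).2 ⟨xa, xa1⟩ ⟨hk3, by simpa using hk4⟩
    have h2 := (hmin k b (by omega) hk2 hbT).1 ⟨hk3, by simpa using hk4⟩ ⟨xb, xb1⟩
    omega
  constructor
  · intro j₁ j₂ h1 h2 h3 h4 h5 h6 a1 a2 a3 a4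
    rcases lt_trichotomy j₁ j₂ with h | h | h
    · exact (keyOn j₁ j₂ (by omega) h (by omega) h6 a1 a2 a3 a4).elim
    · exact h
    · exact (keyOn j₂ j₁ (by omega) h (by omega) h5 a3 a4 a1 a2).elim
  · intro j₁ j₂ h1 h2 h3 h4 h5 h6 a1 a2 a3 a4
    rcases lt_trichotomy j₁ j₂ with h | h | h
    · exact (keyOff j₁ j₂ (by omega) h (by omega) h6 a1 a2 a3 a4).elim
    · exact h
    · exact (keyOff j₂ j₁ (by omega) h (by omega) h5 a3 a4 a1 a2).elim
end

section
/- Let G be a comparability graph with partial order ≤_D, and let (x, y) be a non-negative point satisfying x(v) + y(v,0) + y(v,1) = 1 for every vertex v, and x(u) + x(v) + y(u,1) + y(u,v) + y(v,0) = 1 for every pair u ≤_D v with u ≠ v comparable. Then for any chain C = {v₁ ≤_D ⋯ ≤_D v_k} of G, we have x(C) = Σ_{i=1}^k x(v_i) ≤ 1. -/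
lemma comparability_aux
    {D : Type*} [PartialOrder D]
    (x : D → ℝ) (y0 y1 : D → ℝ) (yp : D → D → ℝ)
    (hx : ∀ v, 0 ≤ x v) (hy0 : ∀ v, 0 ≤ y0 v) (hy1 : ∀ v, 0 ≤ y1 v)
    (hyp : ∀ u v, u < v → 0 ≤ yp u v)
    (heq1 : ∀ v, x v + y0 v + y1 v = 1)
    (heq2 : ∀ u v, u < v → x u + x v + y1 u + yp u v + y0 v = 1)
    (n : ℕ) (w : Fin (n + 1) → D) (hchain : ∀ i j : Fin (n + 1), i < j → w i < w j) :
    ∑ i : Fin n, x (w i.castSucc) ≤ y1 (w (Fin.last n)) := by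
  induction n with
  | zero => simpa using hy1 (w (Fin.last 0))
  | succ m ih =>
    rw [Fin.sum_univ_castSucc]
    have hlt : (Fin.last m).castSucc < Fin.last (m + 1) := by
      simp [Fin.castSucc_lt_last]
    have hwlt := hchain _ _ hlt
    have key := heq2 _ _ hwlt
    have h1 := heq1 (w (Fin.last (m + 1)))
    have hstep : x (w ((Fin.last m).castSucc)) + y1 (w ((Fin.last m).castSucc))
        ≤ y1 (w (Fin.last (m + 1))) := by
      have := hyp _ _ hwlt
      have := hx (w ((Fin.last m).castSucc))
      nlinarith [hy0 (w (Fin.last (m + 1)))]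
    have ihh := ih (fun i => w i.castSucc)
      (fun i j hij => hchain _ _ (by simpa using hij))
    linarith [ihh]

/-- For the small extended formulation of the stable set polytope of a comparability graph:
if `(x, y)` is non-negative and satisfies `x(v) + y(v,0) + y(v,1) = 1` for every vertex and
`x(u) + x(v) + y(u,1) + y(u,v) + y(v,0) = 1` for every comparable pair `u < v`, then
`x(C) ≤ 1` for every chain (clique) `C = {v₁ < ⋯ < v_k}`. -/
theorem comparability_small_ef_clique_valid
    {D : Type*} [PartialOrder D] [Fintype D]
    (x : D → ℝ) (y0 y1 : D → ℝ) (yp : D → D → ℝ)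
    (hx : ∀ v, 0 ≤ x v) (hy0 : ∀ v, 0 ≤ y0 v) (hy1 : ∀ v, 0 ≤ y1 v)
    (hyp : ∀ u v, u < v → 0 ≤ yp u v)
    (heq1 : ∀ v, x v + y0 v + y1 v = 1)
    (heq2 : ∀ u v, u < v → x u + x v + y1 u + yp u v + y0 v = 1)
    (k : ℕ) (v : Fin k → D) (hchain : ∀ i j : Fin k, i < j → v i < v j) :
    ∑ i, x (v i) ≤ 1 := by
  cases k with
  | zero => simp
  | succ m =>
    rw [Fin.sum_univ_castSucc]
    have haux := comparability_aux x y0 y1 yp hx hy0 hy1 hyp heq1 heq2 m v hchain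
    have h1 := heq1 (v (Fin.last m))
    linarith [hy0 (v (Fin.last m))]
end

section
/- Let ℛ be a finite family of pairwise disjoint rectangles partitioning a matrix M (a set X × Y of index pairs). For a fixed entry (r,c), say a rectangle R ∈ ℛ is horizontally good if r is a row of R and R intersects horizontally (shares a row with) at most half of the rectangles in ℛ, and vertically good if c is a column of R and R intersects vertically at most half of the rectangles in ℛ. Then the unique rectangle R_{r,c} ∈ ℛ containing (r,c) is horizontally good or vertically good. -/
/-- Let `ℛ` be a finite family of pairwise disjoint rectangles (pairs `(I, J)` standing for
`I × J`) covering all of `X × Y`.  Then the rectangle containing a fixed entry `(r, c)` is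
horizontally good or vertically good: it shares a row (resp. a column) with at most half of
the other rectangles of `ℛ`. -/
theorem containing_rectangle_is_good
    {X Y : Type*} (R : Finset (Set X × Set Y))
    (hdisj : ∀ R₁ ∈ R, ∀ R₂ ∈ R, R₁ ≠ R₂ → Disjoint (R₁.1 ×ˢ R₁.2) (R₂.1 ×ˢ R₂.2))
    (hcov : ∀ p : X × Y, ∃ Q ∈ R, p.1 ∈ Q.1 ∧ p.2 ∈ Q.2)
    (r : X) (c : Y) (Rc : Set X × Set Y) (hRc : Rc ∈ R)
    (hr : r ∈ Rc.1) (hc : c ∈ Rc.2) :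
    2 * {Q ∈ (R : Set (Set X × Set Y)) | Q ≠ Rc ∧ (Rc.1 ∩ Q.1).Nonempty}.ncard ≤ R.card ∨
    2 * {Q ∈ (R : Set (Set X × Set Y)) | Q ≠ Rc ∧ (Rc.2 ∩ Q.2).Nonempty}.ncard ≤ R.card := by
  classical
  set H : Finset (Set X × Set Y) :=
    R.filter (fun Q => Q ≠ Rc ∧ (Rc.1 ∩ Q.1).Nonempty) with hH
  set V : Finset (Set X × Set Y) :=
    R.filter (fun Q => Q ≠ Rc ∧ (Rc.2 ∩ Q.2).Nonempty) with hV
  have hHset : {Q ∈ (R : Set (Set X × Set Y)) | Q ≠ Rc ∧ (Rc.1 ∩ Q.1).Nonempty} = ↑H := by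
    ext Q; simp [hH]
  have hVset : {Q ∈ (R : Set (Set X × Set Y)) | Q ≠ Rc ∧ (Rc.2 ∩ Q.2).Nonempty} = ↑V := by
    ext Q; simp [hV]
  rw [hHset, hVset, Set.ncard_coe_finset, Set.ncard_coe_finset]
  -- H and V are disjoint
  have hdHV : Disjoint H V := by
    rw [Finset.disjoint_left]
    intro Q hQH hQV
    simp only [hH, hV, Finset.mem_filter] at hQH hQV
    obtain ⟨hQR, hne, x, hx⟩ := hQH
    obtain ⟨-, -, y, hy⟩ := hQV
    have := hdisj Rc hRc Q hQR (Ne.symm hne)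
    exact this.ne_of_mem (⟨hx.1, hy.1⟩ : ((x,y) : X × Y) ∈ Rc.1 ×ˢ Rc.2) ⟨hx.2, hy.2⟩ rfl
  have hsub : H ∪ V ⊆ R := by
    intro Q hQ
    rcases Finset.mem_union.1 hQ with h | h
    · exact (Finset.mem_filter.1 h).1
    · exact (Finset.mem_filter.1 h).1
  have hcard : H.card + V.card ≤ R.card := by
    rw [← Finset.card_union_of_disjoint hdHV]
    exact Finset.card_le_card hsub
  rcases le_total H.card V.card with h | h
  · left; omega
  · right; omega
end
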